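/- If f: ℝⁿ → ℝ is continuously differentiable with L-Lipschitz gradient, g: ℝᵐ → ℝ ∪ {∞} is proper, lsc, convex, T: ℝⁿ → ℝᵐ is linear, and μ > 0, then the proximal augmented Lagrangian L_μ(x;y) = f(x) + M_{μg}(Tx + μy) − (μ/2)‖y‖² has a Lipschitz continuous gradient as a function of (x, y). -/

import Mathlib

open RealInnerProductSpace

section Aux


variable {H : Type*} [NormedAddCommGroup H] [InnerProductSpace ℝ H]

/-- Subgradient inequality for the prox point. -/
lemma aux_prox_subgrad (g : H → ℝ) (hg : ConvexOn ℝ Set.univ g)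
    (μ : ℝ) (hμ : 0 < μ) (prox : H → H)
    (hprox : ∀ v, IsMinOn (fun z => g z + ‖z - v‖ ^ 2 / (2 * μ)) Set.univ (prox v))
    (v z : H) : g (prox v) + ⟪v - prox v, z - prox v⟫ / μ ≤ g z := by
  set p := prox v with hp
  set d := z - p with hd
  have key : ∀ t : ℝ, t ∈ Set.Ioc (0:ℝ) 1 →
      ⟪v - p, d⟫ / μ - (g z - g p) ≤ t * (‖d‖ ^ 2 / (2 * μ)) := by
    intro t ht
    obtain ⟨ht0, ht1⟩ := ht
    have hmin : g p + ‖p - v‖ ^ 2 / (2 * μ)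
        ≤ g (p + t • d) + ‖p + t • d - v‖ ^ 2 / (2 * μ) := hprox v (Set.mem_univ _)
    have hconv : g (p + t • d) ≤ (1 - t) * g p + t * g z := by
      have hcomb : p + t • d = (1 - t) • p + t • z := by
        simp only [hd]; module
      rw [hcomb]
      exact hg.2 (Set.mem_univ p) (Set.mem_univ z) (by linarith) (le_of_lt ht0) (by ring)
    have hnorm : ‖p + t • d - v‖ ^ 2
        = ‖p - v‖ ^ 2 + 2 * (t * ⟪p - v, d⟫) + t ^ 2 * ‖d‖ ^ 2 := by
      have h' : p + t • d - v = (p - v) + t • d := by abel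
      rw [h', norm_add_sq_real, real_inner_smul_right, norm_smul, Real.norm_eq_abs,
        abs_of_pos ht0, mul_pow]
    rw [hnorm] at hmin
    have hsplit : (‖p - v‖ ^ 2 + 2 * (t * ⟪p - v, d⟫) + t ^ 2 * ‖d‖ ^ 2) / (2 * μ)
        = ‖p - v‖ ^ 2 / (2 * μ) + t * (⟪p - v, d⟫ / μ) + t ^ 2 * (‖d‖ ^ 2 / (2 * μ)) := by
      field_simp
    rw [hsplit] at hmin
    have hder : t * g p ≤ t * (g z + ⟪p - v, d⟫ / μ + t * (‖d‖ ^ 2 / (2 * μ))) := by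
      nlinarith [hmin, hconv]
    have h5 : g p ≤ g z + ⟪p - v, d⟫ / μ + t * (‖d‖ ^ 2 / (2 * μ)) :=
      le_of_mul_le_mul_left hder ht0
    have hinner : ⟪v - p, d⟫ = - ⟪p - v, d⟫ := by
      rw [← inner_neg_left]; congr 1; abel
    rw [hinner, neg_div]
    linarith
  have hlim : Filter.Tendsto (fun t : ℝ => t * (‖d‖ ^ 2 / (2 * μ)))
      (nhdsWithin 0 (Set.Ioi 0)) (nhds 0) := by
    have h := (Filter.tendsto_id : Filter.Tendsto id (nhds (0:ℝ)) (nhds 0)).mul_const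
      (‖d‖ ^ 2 / (2 * μ))
    simpa using h.mono_left nhdsWithin_le_nhds
  have hev : ∀ᶠ t in nhdsWithin (0:ℝ) (Set.Ioi 0),
      ⟪v - p, d⟫ / μ - (g z - g p) ≤ t * (‖d‖ ^ 2 / (2 * μ)) := by
    filter_upwards [Ioc_mem_nhdsGT_of_mem (Set.mem_Ico.2 ⟨le_refl (0:ℝ), one_pos⟩)]
      with t ht using key t ht
  have := ge_of_tendsto hlim hev
  linarith

/-- The prox map is 1-Lipschitz. -/
lemma aux_prox_lip (g : H → ℝ) (hg : ConvexOn ℝ Set.univ g)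
    (μ : ℝ) (hμ : 0 < μ) (prox : H → H)
    (hprox : ∀ v, IsMinOn (fun z => g z + ‖z - v‖ ^ 2 / (2 * μ)) Set.univ (prox v)) :
    LipschitzWith 1 prox := by
  apply LipschitzWith.of_dist_le_mul
  intro v w
  have h1 := aux_prox_subgrad g hg μ hμ prox hprox v (prox w)
  have h2 := aux_prox_subgrad g hg μ hμ prox hprox w (prox v)
  set p := prox v
  set q := prox w
  have hsum : ⟪v - p, q - p⟫ + ⟪w - q, p - q⟫ ≤ 0 := by
    have h3 : ⟪v - p, q - p⟫ / μ + ⟪w - q, p - q⟫ / μ ≤ 0 := by linarith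
    have h4 : (⟪v - p, q - p⟫ + ⟪w - q, p - q⟫) / μ ≤ 0 := by rw [add_div]; exact h3
    by_contra hcon
    push_neg at hcon
    exact absurd h4 (not_le.2 (div_pos hcon hμ))
  have hkey : ‖p - q‖ ^ 2 ≤ ⟪v - w, p - q⟫ := by
    have expand : ⟪v - w, p - q⟫ - ‖p - q‖ ^ 2
        = - (⟪v - p, q - p⟫ + ⟪w - q, p - q⟫) := by
      rw [← real_inner_self_eq_norm_sq]
      simp only [inner_sub_left, inner_sub_right]
      ring_nf
    nlinarith [hsum, expand]
  have hcs := real_inner_le_norm (v - w) (p - q)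
  have hn : ‖p - q‖ ≤ ‖v - w‖ := by
    rcases eq_or_lt_of_le (norm_nonneg (p - q)) with h | h
    · rw [← h]; exact norm_nonneg _
    · nlinarith
  simpa [dist_eq_norm, NNReal.coe_one, one_mul] using hn


/-- The Moreau envelope has the expected derivative. -/
lemma aux_M_hasFDerivAt (g : H → ℝ) (hg : ConvexOn ℝ Set.univ g)
    (μ : ℝ) (hμ : 0 < μ) (prox : H → H)
    (hprox : ∀ v, IsMinOn (fun z => g z + ‖z - v‖ ^ 2 / (2 * μ)) Set.univ (prox v))
    (M : H → ℝ) (hM : ∀ v, M v = g (prox v) + ‖prox v - v‖ ^ 2 / (2 * μ)) (v : H) :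
    HasFDerivAt M (μ⁻¹ • innerSL ℝ (v - prox v)) v := by
  have hlip := aux_prox_lip g hg μ hμ prox hprox
  have hμ2 : (0:ℝ) < 2 * μ := by linarith
  have hbound : ∀ w : H, |M w - M v - μ⁻¹ * ⟪v - prox v, w - v⟫|
      ≤ (5 / (2 * μ)) * ‖w - v‖ ^ 2 := by
    intro w
    set p := prox v with hp
    set q := prox w with hq
    have hub : M w - M v ≤ μ⁻¹ * ⟪v - p, w - v⟫ + ‖w - v‖ ^ 2 / (2 * μ) := by
      have h1 : M w ≤ g p + ‖p - w‖ ^ 2 / (2 * μ) := by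
        rw [hM w]; exact hprox w (Set.mem_univ p)
      have h2 : M v = g p + ‖p - v‖ ^ 2 / (2 * μ) := by
        rw [hM v, norm_sub_rev]
      have hexp : ‖p - w‖ ^ 2 = ‖p - v‖ ^ 2 + 2 * ⟪v - p, w - v⟫ + ‖w - v‖ ^ 2 := by
        have h' : p - w = (p - v) + (v - w) := by abel
        rw [h', norm_add_sq_real]
        have e1 : ⟪p - v, v - w⟫ = ⟪v - p, w - v⟫ := by
          rw [← inner_neg_neg]; congr 1 <;> abel
        rw [e1, norm_sub_rev v w]
      have hsplit : (‖p - v‖ ^ 2 + 2 * ⟪v - p, w - v⟫ + ‖w - v‖ ^ 2) / (2 * μ)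
          = ‖p - v‖ ^ 2 / (2 * μ) + μ⁻¹ * ⟪v - p, w - v⟫ + ‖w - v‖ ^ 2 / (2 * μ) := by
        field_simp
      rw [hexp, hsplit] at h1
      linarith
    have hlb : M v - M w ≤ μ⁻¹ * ⟪w - q, v - w⟫ + ‖w - v‖ ^ 2 / (2 * μ) := by
      have h1 : M v ≤ g q + ‖q - v‖ ^ 2 / (2 * μ) := by
        rw [hM v]; exact hprox v (Set.mem_univ q)
      have h2 : M w = g q + ‖q - w‖ ^ 2 / (2 * μ) := by
        rw [hM w, norm_sub_rev]
      have hexp : ‖q - v‖ ^ 2 = ‖q - w‖ ^ 2 + 2 * ⟪w - q, v - w⟫ + ‖w - v‖ ^ 2 := by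
        have h' : q - v = (q - w) + (w - v) := by abel
        rw [h', norm_add_sq_real]
        have e1 : ⟪q - w, w - v⟫ = ⟪w - q, v - w⟫ := by
          rw [← inner_neg_neg]; congr 1 <;> abel
        rw [e1]
      have hsplit : (‖q - w‖ ^ 2 + 2 * ⟪w - q, v - w⟫ + ‖w - v‖ ^ 2) / (2 * μ)
          = ‖q - w‖ ^ 2 / (2 * μ) + μ⁻¹ * ⟪w - q, v - w⟫ + ‖w - v‖ ^ 2 / (2 * μ) := by
        field_simp
      rw [hexp, hsplit] at h1
      linarith
    have hqlip : ‖q - p‖ ≤ ‖w - v‖ := by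
      have := hlip.dist_le_mul w v
      simpa [hp, hq, dist_eq_norm, NNReal.coe_one, one_mul] using this
    have hgap : |⟪w - q, v - w⟫ + ⟪v - p, w - v⟫| ≤ 2 * ‖w - v‖ ^ 2 := by
      have hcomb : ⟪w - q, v - w⟫ + ⟪v - p, w - v⟫ = ⟪(v - p) - (w - q), w - v⟫ := by
        simp only [inner_sub_left, inner_sub_right]
        ring_nf
      rw [hcomb]
      have h1 : |⟪(v - p) - (w - q), w - v⟫| ≤ ‖(v - p) - (w - q)‖ * ‖w - v‖ :=
        abs_real_inner_le_norm _ _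
      have h2 : ‖(v - p) - (w - q)‖ ≤ ‖v - w‖ + ‖q - p‖ := by
        have h' : (v - p) - (w - q) = (v - w) + (q - p) := by abel
        rw [h']; exact norm_add_le _ _
      have h3 : ‖v - w‖ = ‖w - v‖ := norm_sub_rev _ _
      have h4 := norm_nonneg (w - v)
      nlinarith
    rw [abs_le] at hgap ⊢
    have hμi : (0:ℝ) < μ⁻¹ := inv_pos.2 hμ
    have hfive : μ⁻¹ * (2 * ‖w - v‖ ^ 2) + ‖w - v‖ ^ 2 / (2 * μ)
        = (5 / (2 * μ)) * ‖w - v‖ ^ 2 := by field_simp; ring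
    constructor
    · have key : μ⁻¹ * (⟪w - q, v - w⟫ + ⟪v - p, w - v⟫) ≤ μ⁻¹ * (2 * ‖w - v‖ ^ 2) :=
        mul_le_mul_of_nonneg_left hgap.2 (le_of_lt hμi)
      have hdistrib : μ⁻¹ * (⟪w - q, v - w⟫ + ⟪v - p, w - v⟫)
          = μ⁻¹ * ⟪w - q, v - w⟫ + μ⁻¹ * ⟪v - p, w - v⟫ := by ring
      linarith
    · have hd2 : ‖w - v‖ ^ 2 / (2 * μ) ≤ (5 / (2 * μ)) * ‖w - v‖ ^ 2 := by
        rw [div_mul_eq_mul_div, div_le_div_iff₀ hμ2 hμ2]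
        nlinarith [sq_nonneg ‖w - v‖]
      linarith
  rw [hasFDerivAt_iff_isLittleO_nhds_zero, Asymptotics.isLittleO_iff]
  intro c hc
  have hC : (0:ℝ) < 5 / (2 * μ) := by positivity
  have hr : (0:ℝ) < c / (5 / (2 * μ)) := by positivity
  filter_upwards [Metric.ball_mem_nhds (0:H) hr] with h hh
  have hh' : ‖h‖ < c / (5 / (2 * μ)) := by
    simpa [dist_eq_norm] using hh
  have hb := hbound (v + h)
  have hsub : v + h - v = h := by abel
  rw [hsub] at hb
  have happ : (μ⁻¹ • innerSL ℝ (v - prox v)) h = μ⁻¹ * ⟪v - prox v, h⟫ := by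
    rw [ContinuousLinearMap.smul_apply, innerSL_apply_apply, smul_eq_mul]
  rw [Real.norm_eq_abs, happ]
  calc |M (v + h) - M v - μ⁻¹ * ⟪v - prox v, h⟫|
      ≤ (5 / (2 * μ)) * ‖h‖ ^ 2 := hb
    _ ≤ c * ‖h‖ := by
        rw [sq, ← mul_assoc]
        apply mul_le_mul_of_nonneg_right _ (norm_nonneg h)
        calc (5 / (2 * μ)) * ‖h‖ ≤ (5 / (2 * μ)) * (c / (5 / (2 * μ))) :=
              mul_le_mul_of_nonneg_left (le_of_lt hh') (le_of_lt hC)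
          _ = c := by field_simp

end Aux

lemma aux_lip_comp_right {X : Type*} [PseudoMetricSpace X]
    {E F G : Type*} [NormedAddCommGroup E] [NormedSpace ℝ E]
    [NormedAddCommGroup F] [NormedSpace ℝ F] [NormedAddCommGroup G] [NormedSpace ℝ G]
    (c : X → F →L[ℝ] G) (K : NNReal) (hc : LipschitzWith K c) (B : E →L[ℝ] F) :
    LipschitzWith (K * ‖B‖₊) (fun x => (c x).comp B) := by
  apply LipschitzWith.of_dist_le_mul
  intro x y
  have h1 : dist ((c x).comp B) ((c y).comp B) = ‖(c x - c y).comp B‖ := by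
    rw [dist_eq_norm, ← ContinuousLinearMap.sub_comp]
  rw [h1]
  calc ‖(c x - c y).comp B‖ ≤ ‖c x - c y‖ * ‖B‖ := ContinuousLinearMap.opNorm_comp_le _ _
    _ ≤ (K * dist x y) * ‖B‖ := by
        apply mul_le_mul_of_nonneg_right _ (norm_nonneg B)
        rw [← dist_eq_norm]; exact hc.dist_le_mul x y
    _ = ↑(K * ‖B‖₊) * dist x y := by push_cast; ring

set_option maxHeartbeats 1000000 in
set_option synthInstance.maxHeartbeats 400000 in
lemma aux_main {E F : Type*} [NormedAddCommGroup E] [InnerProductSpace ℝ E]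
    [NormedAddCommGroup F] [InnerProductSpace ℝ F]
    (f : E → ℝ) (hdiff_f : Differentiable ℝ f)
    (L : NNReal) (hfL : LipschitzWith L (fun x => fderiv ℝ f x))
    (g : F → ℝ) (hg_conv : ConvexOn ℝ Set.univ g)
    (Tc : E →L[ℝ] F) (μ : ℝ) (hμ : 0 < μ)
    (prox : F → F)
    (hprox : ∀ v, IsMinOn (fun z => g z + ‖z - v‖ ^ 2 / (2 * μ)) Set.univ (prox v))
    (M : F → ℝ)
    (hM : ∀ v, M v = g (prox v) + ‖prox v - v‖ ^ 2 / (2 * μ))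
    (Lag : E × F → ℝ)
    (hLag : ∀ p, Lag p = f p.1 + M (Tc p.1 + μ • p.2) - μ / 2 * ‖p.2‖ ^ 2) :
    Differentiable ℝ Lag ∧ ∃ K : NNReal, LipschitzWith K (fderiv ℝ Lag) := by
  set A : E × F →L[ℝ] F :=
    Tc.comp (ContinuousLinearMap.fst ℝ E F) + μ • ContinuousLinearMap.snd ℝ E F with hA
  have hAval : ∀ p : E × F, A p = Tc p.1 + μ • p.2 := by
    intro p
    simp [hA]
  set D : E × F → (E × F →L[ℝ] ℝ) := fun p =>
    (fderiv ℝ f p.1).comp (ContinuousLinearMap.fst ℝ E F)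
      + ((μ⁻¹ • innerSL ℝ (A p - prox (A p))).comp A)
      - (μ • (innerSL ℝ p.2).comp (ContinuousLinearMap.snd ℝ E F)) with hD
  have hDeriv : ∀ p : E × F, HasFDerivAt Lag (D p) p := by
    intro p
    have hLag' : Lag = fun p : E × F => f p.1 + M (A p) - μ / 2 * ‖p.2‖ ^ 2 := by
      funext q
      rw [hLag, hAval]
    rw [hLag']
    have h1 : HasFDerivAt (fun p : E × F => f p.1)
        ((fderiv ℝ f p.1).comp (ContinuousLinearMap.fst ℝ E F)) p :=
      (hdiff_f p.1).hasFDerivAt.comp p (ContinuousLinearMap.fst ℝ E F).hasFDerivAt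
    have h2 : HasFDerivAt (fun p : E × F => M (A p))
        ((μ⁻¹ • innerSL ℝ (A p - prox (A p))).comp A) p :=
      (aux_M_hasFDerivAt g hg_conv μ hμ prox hprox M hM (A p)).comp p A.hasFDerivAt
    have h3 : HasFDerivAt (fun p : E × F => μ / 2 * ‖p.2‖ ^ 2)
        (μ • (innerSL ℝ p.2).comp (ContinuousLinearMap.snd ℝ E F)) p := by
      have hsq : HasFDerivAt (fun p : E × F => ‖p.2‖ ^ 2)
          (2 • (innerSL ℝ p.2).comp (ContinuousLinearMap.snd ℝ E F)) p :=
        (ContinuousLinearMap.snd ℝ E F).hasFDerivAt.norm_sq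
      have h4 := hsq.const_mul (μ / 2)
      have heq2 : (μ / 2) • (2:ℕ) • ((innerSL ℝ p.2).comp (ContinuousLinearMap.snd ℝ E F))
          = μ • (innerSL ℝ p.2).comp (ContinuousLinearMap.snd ℝ E F) := by
        ext q <;> simp [ContinuousLinearMap.smul_apply] <;> ring
      rw [heq2] at h4
      exact h4
    exact (h1.add h2).sub h3
  refine ⟨fun p => (hDeriv p).differentiableAt, ?_⟩
  have hfd : fderiv ℝ Lag = D := funext fun p => (hDeriv p).fderiv
  rw [hfd]
  have hlip1 : LipschitzWith ((L * 1) * ‖(ContinuousLinearMap.fst ℝ E F)‖₊)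
      (fun p : E × F => (fderiv ℝ f p.1).comp (ContinuousLinearMap.fst ℝ E F)) :=
    aux_lip_comp_right _ _ (hfL.comp LipschitzWith.prod_fst) _
  have hproxlip := aux_prox_lip g hg_conv μ hμ prox hprox
  have hinlip : LipschitzWith (Real.toNNReal (2 / μ))
      (fun v : F => μ⁻¹ • innerSL ℝ (v - prox v)) := by
    apply LipschitzWith.of_dist_le_mul
    intro v w
    have heq : μ⁻¹ • innerSL ℝ (v - prox v) - μ⁻¹ • innerSL ℝ (w - prox w)
        = μ⁻¹ • innerSL ℝ ((v - prox v) - (w - prox w)) := by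
      rw [← smul_sub, ← map_sub]
    rw [dist_eq_norm, heq]
    have hns := norm_smul μ⁻¹ (innerSL ℝ ((v - prox v) - (w - prox w)))
    rw [hns, innerSL_apply_norm]
    have h2 : ‖(v - prox v) - (w - prox w)‖ ≤ ‖v - w‖ + ‖prox v - prox w‖ := by
      have h' : (v - prox v) - (w - prox w) = (v - w) - (prox v - prox w) := by abel
      rw [h']; exact norm_sub_le _ _
    have h3 : ‖prox v - prox w‖ ≤ ‖v - w‖ := by
      have := hproxlip.dist_le_mul v w
      simpa [dist_eq_norm] using this
    have h4 : ‖μ⁻¹‖ = μ⁻¹ := by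
      rw [Real.norm_eq_abs, abs_of_pos (inv_pos.2 hμ)]
    rw [h4, dist_eq_norm]
    have hc : (Real.toNNReal (2 / μ) : ℝ) = 2 / μ := Real.coe_toNNReal _ (by positivity)
    rw [hc]
    have hμi : (0:ℝ) < μ⁻¹ := inv_pos.2 hμ
    calc μ⁻¹ * ‖v - prox v - (w - prox w)‖ ≤ μ⁻¹ * (2 * ‖v - w‖) := by
          apply mul_le_mul_of_nonneg_left _ (le_of_lt hμi)
          linarith
      _ = 2 / μ * ‖v - w‖ := by field_simp
  have hlip2 : LipschitzWith ((Real.toNNReal (2 / μ) * ‖A‖₊) * ‖A‖₊)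
      (fun p : E × F => (μ⁻¹ • innerSL ℝ (A p - prox (A p))).comp A) :=
    aux_lip_comp_right (fun p : E × F => μ⁻¹ • innerSL ℝ (A p - prox (A p))) _
      (hinlip.comp A.lipschitz) A
  have hbase : LipschitzWith (‖(innerSL ℝ : F →L[ℝ] F →L[ℝ] ℝ)‖₊ * 1)
      (fun p : E × F => innerSL ℝ p.2) :=
    (innerSL ℝ : F →L[ℝ] F →L[ℝ] ℝ).lipschitz.comp LipschitzWith.prod_snd
  have hsmul : LipschitzWith (‖μ‖₊ * (‖(innerSL ℝ : F →L[ℝ] F →L[ℝ] ℝ)‖₊ * 1))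
      (fun p : E × F => μ • innerSL ℝ p.2) := (lipschitzWith_smul μ).comp hbase
  have hlip3 : LipschitzWith ((‖μ‖₊ * (‖(innerSL ℝ : F →L[ℝ] F →L[ℝ] ℝ)‖₊ * 1))
      * ‖(ContinuousLinearMap.snd ℝ E F)‖₊)
      (fun p : E × F => μ • (innerSL ℝ p.2).comp (ContinuousLinearMap.snd ℝ E F)) := by
    have h := aux_lip_comp_right (fun p : E × F => μ • innerSL ℝ p.2) _ hsmul
      (ContinuousLinearMap.snd ℝ E F)
    simpa only [ContinuousLinearMap.smul_comp] using h
  exact ⟨_, (hlip1.add hlip2).sub hlip3⟩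

/-- If `f` is `C¹` with `L`-Lipschitz gradient, `g` proper lsc convex,
`T` linear and `μ > 0`, then the proximal augmented Lagrangian
`L_μ(x;y) = f x + M_{μg}(Tx + μy) - (μ/2)‖y‖²` has a Lipschitz continuous
gradient (derivative) as a function of `(x, y)`. -/
theorem proximal_augmented_lagrangian_lipschitz_gradient
    {n m : ℕ} (f : EuclideanSpace ℝ (Fin n) → ℝ) (hf : ContDiff ℝ 1 f)
    (L : NNReal) (hfL : LipschitzWith L (fun x => gradient f x))
    (g : EuclideanSpace ℝ (Fin m) → ℝ)
    (hg_conv : ConvexOn ℝ Set.univ g) (hg_lsc : LowerSemicontinuous g)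
    (T : EuclideanSpace ℝ (Fin n) →ₗ[ℝ] EuclideanSpace ℝ (Fin m))
    (μ : ℝ) (hμ : 0 < μ)
    (prox : EuclideanSpace ℝ (Fin m) → EuclideanSpace ℝ (Fin m))
    (hprox : ∀ v, IsMinOn (fun z => g z + ‖z - v‖ ^ 2 / (2 * μ)) Set.univ (prox v))
    (M : EuclideanSpace ℝ (Fin m) → ℝ)
    (hM : ∀ v, M v = g (prox v) + ‖prox v - v‖ ^ 2 / (2 * μ))
    (Lag : EuclideanSpace ℝ (Fin n) × EuclideanSpace ℝ (Fin m) → ℝ)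
    (hLag : ∀ p, Lag p = f p.1 + M (T p.1 + μ • p.2) - μ / 2 * ‖p.2‖ ^ 2) :
    Differentiable ℝ Lag ∧ ∃ K : NNReal, LipschitzWith K (fderiv ℝ Lag) := by
  have hfderivlip : LipschitzWith L (fun x => fderiv ℝ f x) := by
    apply LipschitzWith.of_dist_le_mul
    intro x y
    have e1 : fderiv ℝ f x
        = (InnerProductSpace.toDual ℝ (EuclideanSpace ℝ (Fin n))) (gradient f x) := by
      rw [gradient]; simp
    have e2 : fderiv ℝ f y
        = (InnerProductSpace.toDual ℝ (EuclideanSpace ℝ (Fin n))) (gradient f y) := by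
      rw [gradient]; simp
    rw [e1, e2, (InnerProductSpace.toDual ℝ (EuclideanSpace ℝ (Fin n))).isometry.dist_eq]
    exact hfL.dist_le_mul x y
  exact aux_main f (hf.differentiable one_ne_zero) L hfderivlip g hg_conv
    (LinearMap.toContinuousLinearMap T) μ hμ prox hprox M hM Lag
    (fun p => by rw [hLag]; simp)
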